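/- arXiv:2303.07097 — 2 statements merged into one kernel-verified Lean document; each statement's English description precedes it below -/
import Mathlib

section
/- If (s,C) and (t,D) are layer points of Γ_k(X), then their least upper bound in Γ_k(X) is again a layer point of Γ_k(X). -/
variable {Z : Type*} [MetricSpace Z]

/-- Vertex set `V_{s,k}(X)` of the degree-Rips complex: points of `X` having at
least `k` other points of `X` within distance `s`. -/
def drVertex (X : Set Z) (k : ℕ) (s : ℝ) : Set Z :=
  {x ∈ X | k ≤ {y ∈ X | y ≠ x ∧ dist x y ≤ s}.ncard}

/-- The generating relation for components: two vertices at distance at most `s`. -/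
def drStep (X : Set Z) (k : ℕ) (s : ℝ) (x y : Z) : Prop :=
  x ∈ drVertex X k s ∧ y ∈ drVertex X k s ∧ dist x y ≤ s

/-- `C` is a degree-Rips component (an element of `π₀ L_{s,k}(X)`): the class of
some vertex `x` under the equivalence relation generated by `drStep`. -/
def drComp (X : Set Z) (k : ℕ) (s : ℝ) (C : Set Z) : Prop :=
  ∃ x ∈ drVertex X k s, C = {y | Relation.ReflTransGen (drStep X k s) x y}

/-- `(t, C)` is a layer point of `Γ_k(X)`: it is an element of the hierarchy, and
every element `(s, D) ≤ (t, C)` with `s < t` has `D` a proper subset of `C`. -/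
def IsLayer (X : Set Z) (k : ℕ) (t : ℝ) (C : Set Z) : Prop :=
  0 ≤ t ∧ drComp X k t C ∧
    ∀ s D, 0 ≤ s → drComp X k s D → s < t → D ⊆ C → D ⊂ C

/-- `(t, C)` is a branch point of `Γ_k(X)`. -/
def IsBranch (X : Set Z) (k : ℕ) (t : ℝ) (C : Set Z) : Prop :=
  0 ≤ t ∧ drComp X k t C ∧
    ((∀ s D, 0 ≤ s → drComp X k s D → s < t → ¬D ⊆ C) ∨
      ∃ s₀, s₀ < t ∧ ∀ s, s₀ ≤ s → s < t →
        ∃ D₁ D₂, drComp X k s D₁ ∧ drComp X k s D₂ ∧ D₁ ≠ D₂ ∧ D₁ ⊆ C ∧ D₂ ⊆ C)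

/-- `(t, D)` is the maximal layer point below the element `(u, C)` of `Γ_k(X)`:
it is a layer point, `(t, D) ≤ (u, C)`, and every layer point below `(u, C)`
is below `(t, D)`. -/
def IsMaxLayerBelow (X : Set Z) (k : ℕ) (u : ℝ) (C : Set Z) (t : ℝ) (D : Set Z) : Prop :=
  IsLayer X k t D ∧ t ≤ u ∧ D ⊆ C ∧
    ∀ t' D', IsLayer X k t' D' → t' ≤ u → D' ⊆ C → t' ≤ t ∧ D' ⊆ D

/-- `t` is a layer parameter of `X`. -/
def IsLayerParam (X : Set Z) (k : ℕ) (t : ℝ) : Prop :=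
  ∃ C, IsLayer X k t C

/-- A stability map `θ : Y → X` (encoded as a map `Z → Z` carrying `Y` into `X`). -/
def IsStabilityMap (X Y : Set Z) (k : ℕ) (r : ℝ) (θ : Z → Z) : Prop :=
  (∀ y ∈ Y, θ y ∈ X) ∧
    ∀ s : ℝ, 0 ≤ s →
      (∀ y₁ y₂, y₁ ∈ drVertex Y k s → y₂ ∈ drVertex Y k s → dist y₁ y₂ ≤ s →
          θ y₁ ∈ drVertex X k (s + 2 * r) ∧ θ y₂ ∈ drVertex X k (s + 2 * r) ∧
          dist (θ y₁) (θ y₂) ≤ s + 2 * r) ∧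
      (∀ x ∈ drVertex X k s, ∃ C, drComp X k (s + 2 * r) C ∧ x ∈ C ∧ θ x ∈ C) ∧
      (∀ y ∈ drVertex Y k s, ∃ D, drComp Y k (s + 2 * r) D ∧ y ∈ D ∧ θ y ∈ D)

/-- Vertices of the degree-Rips complex at scale infinity: points with at least
`k` other points. -/
def drVertexInf (W : Set Z) (k : ℕ) : Set Z :=
  {w ∈ W | k ≤ {w' ∈ W | w' ≠ w}.ncard}

/-- Phase change numbers: distances between distinct vertices at scale infinity. -/
def IsPhaseChange (W : Set Z) (k : ℕ) (t : ℝ) : Prop :=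
  ∃ w₁ ∈ drVertexInf W k, ∃ w₂ ∈ drVertexInf W k, w₁ ≠ w₂ ∧ t = dist w₁ w₂

lemma drStep_symm {X : Set Z} {k : ℕ} {s : ℝ} {x y : Z} (h : drStep X k s x y) :
    drStep X k s y x := ⟨h.2.1, h.1, by rw [dist_comm]; exact h.2.2⟩

lemma drRtg_symm {X : Set Z} {k : ℕ} {s : ℝ} {x y : Z}
    (h : Relation.ReflTransGen (drStep X k s) x y) :
    Relation.ReflTransGen (drStep X k s) y x := by
  induction h with
  | refl => exact Relation.ReflTransGen.refl
  | tail _ hstep ih => exact Relation.ReflTransGen.head (drStep_symm hstep) ih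

lemma drComp_eq_of_subset {X : Set Z} {k : ℕ} {s : ℝ} {C C' : Set Z}
    (hC : drComp X k s C) (hC' : drComp X k s C') (hsub : C ⊆ C') : C = C' := by
  obtain ⟨x, hx, rfl⟩ := hC
  obtain ⟨x', hx', rfl⟩ := hC'
  have hxx' : Relation.ReflTransGen (drStep X k s) x' x :=
    hsub (Relation.ReflTransGen.refl)
  ext y
  constructor
  · exact fun hy => hxx'.trans hy
  · exact fun hy => (drRtg_symm hxx').trans hy

lemma drVertex_mono {X : Set Z} (hXfin : X.Finite) {k : ℕ} {v t : ℝ} (hvt : v ≤ t) :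
    drVertex X k v ⊆ drVertex X k t := by
  rintro x ⟨hxX, hk⟩
  refine ⟨hxX, le_trans hk ?_⟩
  apply Set.ncard_le_ncard
  · rintro y ⟨hyX, hne, hd⟩
    exact ⟨hyX, hne, hd.trans hvt⟩
  · exact hXfin.subset (Set.sep_subset _ _)

lemma drStep_mono {X : Set Z} (hXfin : X.Finite) {k : ℕ} {v t : ℝ} (hvt : v ≤ t)
    {x y : Z} (h : drStep X k v x y) : drStep X k t x y :=
  ⟨drVertex_mono hXfin hvt h.1, drVertex_mono hXfin hvt h.2.1, h.2.2.trans hvt⟩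

lemma drComp_mono {X : Set Z} (hXfin : X.Finite) {k : ℕ} {v t : ℝ} (hvt : v ≤ t)
    {F : Set Z} (hF : drComp X k v F) : ∃ F', drComp X k t F' ∧ F ⊆ F' := by
  obtain ⟨x, hx, rfl⟩ := hF
  refine ⟨_, ⟨x, drVertex_mono hXfin hvt hx, rfl⟩, ?_⟩
  intro y hy
  exact Relation.ReflTransGen.mono (fun a b h => drStep_mono hXfin hvt h) x y hy

/-- the least upper bound in `Γ_k(X)` of two layer points is
again a layer point. -/
theorem lub_of_layer_points_is_layer_point (X : Set Z) (hXfin : X.Finite) (k : ℕ)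
    (s t u : ℝ) (C D E : Set Z)
    (hC : IsLayer X k s C) (hD : IsLayer X k t D)
    (hu : 0 ≤ u) (hE : drComp X k u E)
    (hub₁ : s ≤ u ∧ C ⊆ E) (hub₂ : t ≤ u ∧ D ⊆ E)
    (hleast : ∀ v F, 0 ≤ v → drComp X k v F →
      (s ≤ v ∧ C ⊆ F) → (t ≤ v ∧ D ⊆ F) → u ≤ v ∧ E ⊆ F) :
    IsLayer X k u E := by
  refine ⟨hu, hE, ?_⟩
  intro v F hv hF hvu hFE
  refine ⟨hFE, fun hEF => ?_⟩
  have hFeqE : F = E := subset_antisymm hFE hEF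
  subst hFeqE
  by_cases hsv : s ≤ v
  · by_cases htv : t ≤ v
    · exact absurd ((hleast v F hv hF ⟨hsv, hub₁.2⟩ ⟨htv, hub₂.2⟩).1) (not_le.mpr hvu)
    · -- v < t : F is contained in a component F' at scale t that must equal D
      have hvt : v < t := not_le.mp htv
      obtain ⟨F', hF', hFF'⟩ := drComp_mono hXfin hvt.le hF
      have hDF' : D = F' := drComp_eq_of_subset hD.2.1 hF' (hub₂.2.trans hFF')
      have hFD : F ⊆ D := hDF' ▸ hFF'
      have := hD.2.2 v F hv hF hvt hFD
      exact this.2 hub₂.2 -- D ⊆ E = F contradicts F ⊊ D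
  · have hvs : v < s := not_le.mp hsv
    obtain ⟨F', hF', hFF'⟩ := drComp_mono hXfin hvs.le hF
    have hCF' : C = F' := drComp_eq_of_subset hC.2.1 hF' (hub₁.2.trans hFF')
    have hFC : F ⊆ C := hCF' ▸ hFF'
    have := hC.2.2 v F hv hF hvs hFC
    exact this.2 hub₁.2
end

section
/- Suppose θ : Y → X is a stability map, t is a layer parameter of X, no layer parameter u of X satisfies t < u ≤ t+2r, and the map i : π₀L_{t,k}(X) → π₀L_{t,k}(Y) is surjective (as holds, in the paper's setting, when t > r and the Hausdorff distance between the spaces of k+1 distinct points of X and Y is less than r). Then i : π₀L_{t,k}(X) → π₀L_{t,k}(Y) is a bijection. -/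
variable {Z : Type*} [MetricSpace Z]

private lemma rtg_symm' {W : Set Z} {k : ℕ} {s : ℝ} {x y : Z}
    (h : Relation.ReflTransGen (drStep W k s) x y) :
    Relation.ReflTransGen (drStep W k s) y x :=
  haveI : Std.Symm (drStep W k s) :=
    ⟨fun _ _ h => ⟨h.2.1, h.1, by rw [dist_comm]; exact h.2.2⟩⟩
  Std.Symm.symm _ _ h

private lemma drVertex_mono' {W : Set Z} (hW : W.Finite) {k : ℕ} {s s' : ℝ} (h : s ≤ s') :
    drVertex W k s ⊆ drVertex W k s' := by
  rintro x ⟨hx, hk⟩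
  refine ⟨hx, le_trans hk (Set.ncard_le_ncard ?_ (hW.subset (Set.sep_subset _ _)))⟩
  rintro y ⟨hy, hne, hd⟩
  exact ⟨hy, hne, hd.trans h⟩

private lemma drStep_mono' {W : Set Z} (hW : W.Finite) {k : ℕ} {s s' : ℝ} (h : s ≤ s')
    {x y : Z} (hst : drStep W k s x y) : drStep W k s' x y :=
  ⟨drVertex_mono' hW h hst.1, drVertex_mono' hW h hst.2.1, hst.2.2.trans h⟩

private lemma comp_rel' {W : Set Z} {k : ℕ} {s : ℝ} {C : Set Z} (hC : drComp W k s C)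
    {a b : Z} (ha : a ∈ C) (hb : b ∈ C) : Relation.ReflTransGen (drStep W k s) a b := by
  obtain ⟨x, -, rfl⟩ := hC
  exact (rtg_symm' ha).trans hb

private lemma drStep_of_no_gap' {W : Set Z} {k : ℕ} {a b : ℝ} (hab : a ≤ b)
    (hgap : ∀ x ∈ W, ∀ y ∈ W, dist x y ≤ b → dist x y ≤ a) {x y : Z}
    (h : drStep W k b x y) : drStep W k a x y := by
  have hv : ∀ z, z ∈ drVertex W k b → z ∈ drVertex W k a := by
    rintro z ⟨hz, hk⟩
    refine ⟨hz, ?_⟩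
    have hset : {w ∈ W | w ≠ z ∧ dist z w ≤ b} = {w ∈ W | w ≠ z ∧ dist z w ≤ a} := by
      ext w
      constructor
      · rintro ⟨hw, hne, hd⟩; exact ⟨hw, hne, hgap z hz w hw hd⟩
      · rintro ⟨hw, hne, hd⟩; exact ⟨hw, hne, hd.trans hab⟩
    rwa [hset] at hk
  exact ⟨hv _ h.1, hv _ h.2.1, hgap x h.1.1 y h.2.1.1 h.2.2⟩

/-- for a stability map `θ : Y → X`, if `t` is a layer parameter
of `X`, no layer parameter `u` of `X` satisfies `t < u ≤ t + 2r`, and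
`i : π₀ L_{t,k}(X) → π₀ L_{t,k}(Y)` is surjective, then `i` is a bijection
(stated as surjectivity and injectivity of the containment relation defining
`i`). -/
theorem i_bijection_on_components (X Y : Set Z)
    (hXfin : X.Finite) (hYfin : Y.Finite) (hXY : X ⊆ Y)
    (k : ℕ) (r : ℝ) (hr : 0 < r) (θ : Z → Z) (hθ : IsStabilityMap X Y k r θ)
    (t : ℝ) (ht : IsLayerParam X k t)
    (hgap : ∀ u, t < u → u ≤ t + 2 * r → ¬IsLayerParam X k u)
    (hsurj : ∀ D, drComp Y k t D → ∃ C, drComp X k t C ∧ C ⊆ D) :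
    (∀ D, drComp Y k t D → ∃ C, drComp X k t C ∧ C ⊆ D) ∧
      ∀ C₁ C₂ D, drComp X k t C₁ → drComp X k t C₂ → drComp Y k t D →
        C₁ ⊆ D → C₂ ⊆ D → C₁ = C₂ := by
  obtain ⟨C₀, ht0, -⟩ := ht
  refine ⟨hsurj, ?_⟩
  rintro C₁ C₂ D ⟨x₁, hx₁v, rfl⟩ ⟨x₂, hx₂v, rfl⟩ hD h₁ h₂
  suffices hrel : Relation.ReflTransGen (drStep X k t) x₁ x₂ by
    ext y
    exact ⟨fun h => (rtg_symm' hrel).trans h, fun h => hrel.trans h⟩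
  have hx₁D : x₁ ∈ D := h₁ Relation.ReflTransGen.refl
  have hx₂D : x₂ ∈ D := h₂ Relation.ReflTransGen.refl
  obtain ⟨hθX, hθs⟩ := hθ
  obtain ⟨ha, hb, -⟩ := hθs t ht0
  -- connect x₁ and x₂ in X at scale t + 2r via θ
  have hxyY : Relation.ReflTransGen (drStep Y k t) x₁ x₂ := comp_rel' hD hx₁D hx₂D
  have hθchain : Relation.ReflTransGen (drStep X k (t + 2 * r)) (θ x₁) (θ x₂) :=
    Relation.ReflTransGen.lift θ (fun a b hab => ha a b hab.1 hab.2.1 hab.2.2) _ _ hxyY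
  have h1θ : Relation.ReflTransGen (drStep X k (t + 2 * r)) x₁ (θ x₁) := by
    obtain ⟨C', hC', hxC', hθC'⟩ := hb x₁ hx₁v
    exact comp_rel' hC' hxC' hθC'
  have h2θ : Relation.ReflTransGen (drStep X k (t + 2 * r)) x₂ (θ x₂) := by
    obtain ⟨C', hC', hxC', hθC'⟩ := hb x₂ hx₂v
    exact comp_rel' hC' hxC' hθC'
  have key : Relation.ReflTransGen (drStep X k (t + 2 * r)) x₁ x₂ :=
    h1θ.trans (hθchain.trans (rtg_symm' h2θ))
  by_contra hnot
  -- the set of candidate merging scales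
  set S : Set ℝ := Set.image2 dist X X ∩ Set.Ioc t (t + 2 * r) with hS
  have hSfin : S.Finite := (hXfin.image2 dist hXfin).inter_of_left _
  set U : Set ℝ :=
    {d ∈ insert (t + 2 * r) S | Relation.ReflTransGen (drStep X k d) x₁ x₂} with hU
  have hUfin : U.Finite := ((hSfin.insert _).subset (Set.sep_subset _ _))
  have hUne : U.Nonempty := ⟨t + 2 * r, Set.mem_insert _ _, key⟩
  obtain ⟨u, huU, humin⟩ := Set.exists_min_image U id hUfin hUne
  have hu2r : u ≤ t + 2 * r := by
    rcases huU.1 with h | h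
    · exact h.le
    · exact h.2.2
  have htu : t < u := by
    rcases huU.1 with h | h
    · rw [h]; linarith
    · exact h.2.1
  have hbelow : ∀ v, v < u → ¬ Relation.ReflTransGen (drStep X k v) x₁ x₂ := by
    intro v hv hR
    rcases le_or_gt v t with hvt | hvt
    · exact hnot (Relation.ReflTransGen.mono (fun p q => drStep_mono' hXfin hvt) _ _ hR)
    · set A : Set ℝ := insert t {d ∈ S | d ≤ v} with hA
      have hAfin : A.Finite := (hSfin.subset (Set.sep_subset _ _)).insert _
      have hAne : A.Nonempty := ⟨t, Set.mem_insert _ _⟩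
      obtain ⟨a, haA, hamax⟩ := Set.exists_max_image A id hAfin hAne
      have hta : t ≤ a := hamax t (Set.mem_insert _ _)
      have hav : a ≤ v := by
        rcases haA with h | h
        · rw [h]; exact hvt.le
        · exact h.2
      have hgapless : ∀ x ∈ X, ∀ y ∈ X, dist x y ≤ v → dist x y ≤ a := by
        intro x hx y hy hd
        rcases le_or_gt (dist x y) t with h | h
        · exact h.trans hta
        · refine hamax _ (Set.mem_insert_of_mem _ ⟨⟨⟨x, hx, y, hy, rfl⟩, h, ?_⟩, hd⟩)
          have := hd.trans_lt (hv.trans_le hu2r)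
          linarith
      have hRa : Relation.ReflTransGen (drStep X k a) x₁ x₂ :=
        Relation.ReflTransGen.mono (fun p q => drStep_of_no_gap' hav hgapless) _ _ hR
      rcases eq_or_lt_of_le hta with h | h
      · exact hnot (h ▸ hRa)
      · rcases haA with heq | hmem
        · exact absurd heq h.ne'
        · have : u ≤ a := humin a ⟨Set.mem_insert_of_mem _ hmem.1, hRa⟩
          linarith
  refine hgap u htu hu2r ⟨{y | Relation.ReflTransGen (drStep X k u) x₁ y}, ?_, ?_, ?_⟩
  · linarith
  · exact ⟨x₁, drVertex_mono' hXfin htu.le hx₁v, rfl⟩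
  · intro s E hs hE hsu hEC
    rw [Set.ssubset_iff_subset_ne]
    refine ⟨hEC, fun hEq => ?_⟩
    have hx₁E : x₁ ∈ E := by rw [hEq]; exact Relation.ReflTransGen.refl
    have hx₂E : x₂ ∈ E := by rw [hEq]; exact huU.2
    exact hbelow s hsu (comp_rel' hE hx₁E hx₂E)
end
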